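/- Let k, m be natural numbers and x a natural number with 0 < x < 2^k. Then the number of t ∈ {0, 1, …, m·2^k − 1} with ⌊(x + t)/2^k⌋ = ⌊t/2^k⌋ equals m·(2^k − x). Hence, for t uniform on a range that is a whole number of truncation blocks, the truncation fault probability for the small positive value x is exactly (2^k − x)/2^k. -/

import Mathlib

lemma fault_iff_mod (k x : ℕ) (hx : 0 < x) (hxk : x < 2 ^ k) (t : ℕ) :
    (x + t) / 2 ^ k = t / 2 ^ k ↔ t % 2 ^ k < 2 ^ k - x := by
  have h2 : 0 < 2 ^ k := by positivity
  have hd : (x + t) / 2 ^ k = (x + t % 2 ^ k) / 2 ^ k + t / 2 ^ k := by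
    conv_lhs => rw [← Nat.div_add_mod t (2 ^ k)]
    rw [show x + (2 ^ k * (t / 2 ^ k) + t % 2 ^ k) = x + t % 2 ^ k + t / 2 ^ k * 2 ^ k by ring,
      Nat.add_mul_div_right _ _ h2]
  rw [hd]
  have hz : (x + t % 2 ^ k) / 2 ^ k = 0 ↔ x + t % 2 ^ k < 2 ^ k :=
    by rw [Nat.div_eq_zero_iff]; omega
  have hm := Nat.mod_lt t h2
  omega

/-- For `0 < x < 2^k`, the number of masks `t ∈ {0,…, m·2^k - 1}` on which the
`k`-bit truncated stochastic sign test faults on the small positive value `x`,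
i.e. `⌊(x + t)/2^k⌋ = ⌊t/2^k⌋`, equals `m · (2^k - x)`.  Hence for a uniform
mask on a whole number of truncation blocks, the fault probability is exactly
`(2^k - x) / 2^k`. -/
theorem truncated_fault_count_blocks (k m x : ℕ) (hx : 0 < x) (hxk : x < 2 ^ k) :
    ((Finset.range (m * 2 ^ k)).filter
      (fun t => (x + t) / 2 ^ k = t / 2 ^ k)).card = m * (2 ^ k - x) := by
  have hfilt : ∀ n, (Finset.range n).filter (fun t => (x + t) / 2 ^ k = t / 2 ^ k)
      = (Finset.range n).filter (fun t => t % 2 ^ k < 2 ^ k - x) := by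
    intro n
    apply Finset.filter_congr
    intro t _
    simpa using fault_iff_mod k x hx hxk t
  rw [hfilt]
  induction m with
  | zero => simp
  | succ m ih =>
    rw [Nat.succ_mul, Finset.range_add, Finset.filter_union, Finset.card_union_of_disjoint,
      ih, Nat.succ_mul]
    · congr 1
      rw [Finset.filter_map, Finset.card_map]
      have : (Finset.range (2 ^ k)).filter
          ((fun t => t % 2 ^ k < 2 ^ k - x) ∘ ⇑(addLeftEmbedding (m * 2 ^ k)))
          = Finset.range (2 ^ k - x) := by
        ext r
        simp only [Finset.mem_filter, Finset.mem_range, Function.comp,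
          addLeftEmbedding_apply, Nat.mul_add_mod]
        rw [Nat.mul_comm m (2 ^ k), Nat.mul_add_mod]
        constructor
        · rintro ⟨hr, h⟩
          rwa [Nat.mod_eq_of_lt hr] at h
        · intro h
          have hlt : r < 2 ^ k := by omega
          exact ⟨hlt, by rwa [Nat.mod_eq_of_lt hlt]⟩
      rw [this, Finset.card_range]
    · exact Finset.disjoint_filter_filter (Finset.disjoint_left.mpr (by
        intro a ha hb
        simp only [Finset.mem_range] at ha
        simp only [Finset.mem_map, Finset.mem_range, addLeftEmbedding_apply] at hb
        obtain ⟨r, _, hr⟩ := hb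
        omega))
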